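/- Let G be a finite group. Then the girth of the intersection graph of subgroups I(G) is either 3 or infinity; that is, either I(G) contains a triangle (a 3-clique) or I(G) is acyclic (contains no cycle at all). -/

import Mathlib

open SimpleGraph

namespace IGAux

variable {V : Type*} {G : SimpleGraph V}

lemma getVert_eq_support_getElem {u v : V} (p : G.Walk u v) {i : ℕ} (hi : i ≤ p.length) :
    p.getVert i = p.support[i]'(by rw [SimpleGraph.Walk.length_support]; omega) := by
  induction p generalizing i with
  | nil =>
    have : i = 0 := by simpa using hi
    subst this; simp
  | cons h q ih =>
    cases i with
    | zero => simp
    | succ n =>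
      simp only [SimpleGraph.Walk.getVert_cons_succ, SimpleGraph.Walk.support_cons,
        List.getElem_cons_succ]
      exact ih (by simpa using hi)

lemma cycle_getVert_inj {a : V} {c : G.Walk a a} (hc : c.IsCycle) {i j : ℕ}
    (hi1 : 1 ≤ i) (hin : i ≤ c.length) (hj1 : 1 ≤ j) (hjn : j ≤ c.length)
    (h : c.getVert i = c.getVert j) : i = j := by
  have hnd := hc.support_nodup
  have hlt : c.support.tail.length = c.length := by
    simp [SimpleGraph.Walk.length_support]
  have e1 : c.getVert i = c.support.tail[i-1]'(by omega) := by
    rw [getVert_eq_support_getElem c hin, List.getElem_tail]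
    congr 1; omega
  have e2 : c.getVert j = c.support.tail[j-1]'(by omega) := by
    rw [getVert_eq_support_getElem c hjn, List.getElem_tail]
    congr 1; omega
  rw [e1, e2] at h
  have := (hnd.getElem_inj_iff).mp h
  omega

lemma egirth_le_three_of_triangle {x y z : V} (hxy : G.Adj x y) (hyz : G.Adj y z)
    (hxz : G.Adj x z) : G.egirth ≤ 3 := by
  have hcyc : (SimpleGraph.Walk.cons hxy (.cons hyz (.cons hxz.symm .nil))).IsCycle := by
    simp [SimpleGraph.Walk.isCycle_def, SimpleGraph.Walk.isTrail_def, hxy.ne, hyz.ne, hxz.ne,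
      hxy.ne', hyz.ne', hxz.ne', Sym2.eq_iff]
  calc G.egirth ≤ ((SimpleGraph.Walk.cons hxy (.cons hyz (.cons hxz.symm .nil))).length : ℕ∞) := by
        rw [SimpleGraph.egirth]
        exact iInf_le_of_le x (iInf_le_of_le _ (iInf_le_of_le hcyc le_rfl))
    _ = 3 := by simp

end IGAux

/-- The intersection graph of subgroups of a group `G`: vertices are the
nontrivial proper subgroups of `G`, and two distinct vertices are adjacent
iff the corresponding subgroups have nontrivial intersection. -/
def interGraph (G : Type*) [Group G] :
    SimpleGraph {H : Subgroup G // H ≠ ⊥ ∧ H ≠ ⊤} where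
  Adj H K := H ≠ K ∧ H.1 ⊓ K.1 ≠ ⊥
  symm := by
    constructor
    rintro H K ⟨hne, hint⟩
    exact ⟨hne.symm, by rwa [inf_comm] at hint⟩
  loopless := by
    constructor
    rintro H ⟨hne, _⟩
    exact hne rfl

theorem intersectionGraph_egirth_eq_three_or_top (G : Type*) [Group G] [Finite G] :
    (interGraph G).egirth = 3 ∨ (interGraph G).egirth = ⊤ := by
  by_cases hacyc : (interGraph G).IsAcyclic
  · right; exact hacyc.egirth_eq_top
  left
  refine le_antisymm ?_ three_le_egirth
  by_contra hgt
  push_neg at hgt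
  -- there is no triangle
  have hno : ∀ x y z : {H : Subgroup G // H ≠ ⊥ ∧ H ≠ ⊤},
      (interGraph G).Adj x y → (interGraph G).Adj y z → (interGraph G).Adj x z → False := by
    intro x y z h1 h2 h3
    exact absurd (IGAux.egirth_le_three_of_triangle h1 h2 h3) (not_le.mpr hgt)
  -- hence any two adjacent subgroups are comparable
  have hcomp : ∀ x y, (interGraph G).Adj x y → x.1 ≤ y.1 ∨ y.1 ≤ x.1 := by
    intro x y hxy
    by_contra hcon
    push_neg at hcon
    have hLbot : x.1 ⊓ y.1 ≠ ⊥ := hxy.2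
    have hLtop : x.1 ⊓ y.1 ≠ ⊤ := by
      intro h
      exact x.2.2 (top_le_iff.mp (h.ge.trans inf_le_left))
    set l : {H : Subgroup G // H ≠ ⊥ ∧ H ≠ ⊤} := ⟨x.1 ⊓ y.1, hLbot, hLtop⟩ with hl
    have hlx : (interGraph G).Adj x l := by
      refine ⟨fun h => ?_, ?_⟩
      · exact hcon.1 (by rw [h]; exact inf_le_right)
      · rwa [show x.1 ⊓ l.1 = x.1 ⊓ y.1 from (inf_eq_right.mpr inf_le_left)]
    have hly : (interGraph G).Adj l y := by
      refine ⟨fun h => ?_, ?_⟩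
      · exact hcon.2 (by rw [← h]; exact inf_le_left)
      · rwa [show l.1 ⊓ y.1 = x.1 ⊓ y.1 from (inf_eq_left.mpr inf_le_right)]
    exact hno x l y hlx hly hxy
  -- take a cycle
  obtain ⟨a, w, hw, -⟩ := (exists_egirth_eq_length).mpr hacyc
  set n := w.length with hn
  have hn3 : 3 ≤ n := hw.three_le_length
  set v : ℕ → {H : Subgroup G // H ≠ ⊥ ∧ H ≠ ⊤} := w.getVert with hv
  have hadj : ∀ i, i < n → (interGraph G).Adj (v i) (v (i + 1)) :=
    fun i hi => w.adj_getVert_succ hi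
  have hv0 : v n = v 0 := by
    rw [hv]; rw [w.getVert_length, w.getVert_zero]
  have inj : ∀ i j, 1 ≤ i → i ≤ n → 1 ≤ j → j ≤ n → v i = v j → i = j :=
    fun i j hi1 hin hj1 hjn h => IGAux.cycle_getVert_inj hw hi1 hin hj1 hjn h
  -- pick a vertex of minimal cardinality on the cycle
  obtain ⟨i, hiIcc, hmin⟩ := Finset.exists_min_image (Finset.Icc 1 n)
    (fun j => Nat.card (v j).1) ⟨1, Finset.mem_Icc.mpr ⟨le_rfl, by omega⟩⟩
  rw [Finset.mem_Icc] at hiIcc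
  -- minimality forces `v i` below its neighbours
  have hmono : ∀ j, 1 ≤ j → j ≤ n → (interGraph G).Adj (v i) (v j) → (v i).1 ≤ (v j).1 := by
    intro j hj1 hjn hadj'
    rcases hcomp _ _ hadj' with h | h
    · exact h
    · have hc := hmin j (Finset.mem_Icc.mpr ⟨hj1, hjn⟩)
      have heq : (v j).1 = (v i).1 := Subgroup.eq_of_le_of_card_ge h hc
      exact (hadj'.1 (Subtype.ext heq.symm)).elim
  -- the final contradiction step
  have final : ∀ (x y z : {H : Subgroup G // H ≠ ⊥ ∧ H ≠ ⊤}),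
      (interGraph G).Adj y x → (interGraph G).Adj y z → y.1 ≤ x.1 → y.1 ≤ z.1 → x ≠ z → False := by
    intro x y z h1 h2 hle1 hle2 hne
    refine hno x y z h1.symm h2 ⟨hne, fun hb => ?_⟩
    exact y.2.1 (le_bot_iff.mp ((le_inf hle1 hle2).trans hb.le))
  by_cases h1 : i = 1
  · subst h1
    have ha1 : (interGraph G).Adj (v 1) (v n) := by
      rw [hv0]; exact (hadj 0 (by omega)).symm
    have ha2 : (interGraph G).Adj (v 1) (v 2) := hadj 1 (by omega)
    refine final (v n) (v 1) (v 2) ha1 ha2 (hmono n (by omega) le_rfl ha1)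
      (hmono 2 (by omega) (by omega) ha2) (fun h => ?_)
    have := inj n 2 (by omega) le_rfl (by omega) (by omega) h
    omega
  by_cases hin : i = n
  · subst hin
    have e1 : n - 1 + 1 = n := by omega
    have ha1 : (interGraph G).Adj (v n) (v (n - 1)) := by
      have := hadj (n - 1) (by omega)
      rw [e1] at this
      exact this.symm
    have ha2 : (interGraph G).Adj (v n) (v 1) := by
      rw [hv0]; exact hadj 0 (by omega)
    refine final (v (n - 1)) (v n) (v 1) ha1 ha2 (hmono (n - 1) (by omega) (by omega) ha1)
      (hmono 1 (by omega) (by omega) ha2) (fun h => ?_)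
    have := inj (n - 1) 1 (by omega) (by omega) (by omega) (by omega) h
    omega
  · have hi2 : 2 ≤ i := by omega
    have hilt : i < n := by omega
    have e1 : i - 1 + 1 = i := by omega
    have ha1 : (interGraph G).Adj (v i) (v (i - 1)) := by
      have := hadj (i - 1) (by omega)
      rw [e1] at this
      exact this.symm
    have ha2 : (interGraph G).Adj (v i) (v (i + 1)) := hadj i hilt
    refine final (v (i - 1)) (v i) (v (i + 1)) ha1 ha2
      (hmono (i - 1) (by omega) (by omega) ha1)
      (hmono (i + 1) (by omega) (by omega) ha2) (fun h => ?_)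
    have := inj (i - 1) (i + 1) (by omega) (by omega) (by omega) (by omega) h
    omega
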